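/- Let f : (0,∞) → ℝ be a differentiable function such that f(b) - f(a) = (b - a)·f'(S₁(a,b)) for all a, b > 0. Then there exist constants c₁, c₂, c₃ ∈ ℝ such that f(x) = c₁·x·log(x) + c₂·x + c₃ for all x > 0. -/

import Mathlib

open Real Set Filter Topology

/-- The identric mean of two positive reals. -/
noncomputable def identricMean (a b : ℝ) : ℝ :=
  if a = b then a
  else Real.exp (-1) * Real.exp ((b * Real.log b - a * Real.log a) / (b - a))

lemma im_comm (a b : ℝ) : identricMean a b = identricMean b a := by
  unfold identricMean
  rcases eq_or_ne a b with rfl | h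
  · simp
  · rw [if_neg h, if_neg h.symm]
    congr 1
    rw [← neg_div_neg_eq]; ring_nf

lemma im_mem {a b : ℝ} (ha : 0 < a) (hab : a < b) : identricMean a b ∈ Ioo a b := by
  obtain ⟨c, hc, hc'⟩ := exists_hasDerivAt_eq_slope (fun x => x * Real.log x - x)
    (fun x => Real.log x) hab
    (by
      apply ContinuousOn.sub _ continuousOn_id
      exact Real.continuous_mul_log.continuousOn)
    (fun x hx => by
      have h1 : HasDerivAt (fun x : ℝ => x * Real.log x) (Real.log x + 1) x :=
        Real.hasDerivAt_mul_log (by linarith [hx.1] : x ≠ 0)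
      exact (h1.sub (hasDerivAt_id x)).congr_deriv (by ring))
  have : identricMean a b = c := by
    unfold identricMean
    rw [if_neg (ne_of_lt hab), ← Real.exp_add]
    rw [← Real.exp_log (lt_trans ha hc.1)]
    congr 1
    rw [hc']
    have hba : b - a ≠ 0 := by linarith
    field_simp
    ring
  rwa [this]

lemma im_pos {a b : ℝ} (ha : 0 < a) : 0 < identricMean a b := by
  unfold identricMean
  split
  · exact ha
  · positivity

lemma im_log {a b : ℝ} (hne : a ≠ b) :
    Real.log (identricMean a b) = (b * Real.log b - a * Real.log a) / (b - a) - 1 := by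
  unfold identricMean
  rw [if_neg hne, ← Real.exp_add, Real.log_exp]
  ring

lemma hasStrictDerivAt_congr {f g : ℝ → ℝ} {d x : ℝ} (h : HasStrictDerivAt f d x)
    (he : g =ᶠ[𝓝 x] f) : HasStrictDerivAt g d x :=
  HasStrictFDerivAt.congr_of_eventuallyEq h he.symm

lemma im_hasStrictDerivAt {a b₀ : ℝ} (hb : 0 < b₀) (hne : b₀ ≠ a) :
    HasStrictDerivAt (fun b => identricMean a b)
      (identricMean a b₀ * (Real.log b₀ - Real.log (identricMean a b₀)) / (b₀ - a)) b₀ := by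
  have hba : b₀ - a ≠ 0 := sub_ne_zero.mpr hne
  have hne' : a ≠ b₀ := fun h => hne h.symm
  have hN : HasStrictDerivAt (fun b => b * Real.log b - a * Real.log a) (Real.log b₀ + 1) b₀ := by
    have h0 := ((hasStrictDerivAt_id b₀).mul (Real.hasStrictDerivAt_log hb.ne')).sub_const
      (a * Real.log a)
    have h2 : (1:ℝ) * Real.log b₀ + id b₀ * b₀⁻¹ = Real.log b₀ + 1 := by
      simp [mul_inv_cancel₀ hb.ne']
    rw [h2] at h0
    exact h0
  have hD : HasStrictDerivAt (fun b => b - a) 1 b₀ := (hasStrictDerivAt_id b₀).sub_const a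
  have hu := hN.div hD hba
  have hE := ((hu.exp).const_mul (Real.exp (-1)))
  have heq : (fun b => identricMean a b) =ᶠ[𝓝 b₀]
      (fun b => Real.exp (-1) * Real.exp ((b * Real.log b - a * Real.log a) / (b - a))) := by
    filter_upwards [eventually_ne_nhds hne] with b hb'
    unfold identricMean
    rw [if_neg (fun h => hb' h.symm)]
  have key : ∀ X Y L N d : ℝ, d ≠ 0 →
      X * Y * (L - (N / d - 1)) / d = X * (Y * ((L + 1) * d - N * 1) / d ^ 2) := by
    intros X Y L N d hd
    field_simp
    ring
  have hval : identricMean a b₀ * (Real.log b₀ - Real.log (identricMean a b₀)) / (b₀ - a)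
      = Real.exp (-1) * (Real.exp ((b₀ * Real.log b₀ - a * Real.log a) / (b₀ - a)) *
        ((Real.log b₀ + 1) * (b₀ - a) - (b₀ * Real.log b₀ - a * Real.log a) * 1) / (b₀ - a) ^ 2) := by
    rw [im_log hne']
    unfold identricMean
    rw [if_neg hne']
    exact key _ _ _ _ _ hba
  rw [hval]
  refine hasStrictDerivAt_congr ?_ heq
  exact hE.congr_deriv (by simp only [Pi.div_apply]; ring)

lemma im_exists {y b₀ : ℝ} (hy : 0 < y) (hb : 0 < b₀) (hne : b₀ ≠ y)
    (hlt : b₀ < Real.exp 1 * y) : ∃ a, 0 < a ∧ a ≠ b₀ ∧ identricMean a b₀ = y := by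
  set h : ℝ → ℝ := fun a =>
    Real.exp (-1) * Real.exp ((b₀ * Real.log b₀ - a * Real.log a) / (b₀ - a)) with hh
  have hid : ∀ a, a ≠ b₀ → identricMean a b₀ = h a := by
    intro a ha
    unfold identricMean
    rw [if_neg ha]
  have hcont : ∀ s : Set ℝ, (∀ a ∈ s, b₀ - a ≠ 0) → ContinuousOn h s := by
    intro s hs
    apply ContinuousOn.mul continuousOn_const
    apply Real.continuous_exp.comp_continuousOn
    exact (continuousOn_const.sub Real.continuous_mul_log.continuousOn).div
      (continuousOn_const.sub continuousOn_id) hs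
  have h0 : h 0 = Real.exp (-1) * b₀ := by
    simp only [hh, Real.log_zero, mul_zero, zero_mul, sub_zero]
    rw [mul_comm b₀, mul_div_assoc, div_self hb.ne', mul_one, Real.exp_log hb]
  have h0lt : h 0 < y := by
    rw [h0]
    rw [Real.exp_neg]
    rw [inv_mul_lt_iff₀ (Real.exp_pos 1)]
    linarith
  rcases lt_or_gt_of_ne hne with hby | hby
  · -- b₀ < y : search a ∈ [y, A]
    have hyc : identricMean y b₀ ∈ Ioo b₀ y := by rw [im_comm]; exact im_mem hb hby
    have hyy : h y < y := by rw [← hid y (ne_of_gt hby)]; exact hyc.2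
    set S : ℝ := Real.log y + 1 with hS
    set R : ℝ := b₀ * Real.log b₀ - S * b₀ with hR
    set A : ℝ := max (Real.exp (S + 1)) (max |R| y) + 1 with hA
    have hAy : y < A := by
      have : y ≤ max (Real.exp (S + 1)) (max |R| y) :=
        le_trans (le_max_right _ _) (le_max_right _ _)
      linarith
    have hApos : 0 < A := lt_trans hy hAy
    have hAb : b₀ < A := lt_trans hby hAy
    have hlogA : S + 1 < Real.log A := by
      rw [← Real.log_exp (S + 1)]
      apply Real.log_lt_log (Real.exp_pos _)
      calc Real.exp (S + 1) ≤ max (Real.exp (S + 1)) (max |R| y) := le_max_left _ _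
        _ < A := by rw [hA]; linarith
    have hRA : |R| < A := by
      have : |R| ≤ max (Real.exp (S + 1)) (max |R| y) :=
        le_trans (le_max_left _ _) (le_max_right _ _)
      linarith
    have hAbig : R < A * (Real.log A - S) := by
      have h1 : (1:ℝ) < Real.log A - S := by linarith
      have h2 : A < A * (Real.log A - S) := by nlinarith
      have h3 : R ≤ |R| := le_abs_self R
      linarith
    have hAlt : y < h A := by
      have hd : 0 < A - b₀ := by linarith
      have hslope : S < (A * Real.log A - b₀ * Real.log b₀) / (A - b₀) := by
        rw [lt_div_iff₀ hd]
        rw [hR] at hAbig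
        nlinarith
      have : Real.log y < (b₀ * Real.log b₀ - A * Real.log A) / (b₀ - A) - 1 := by
        have hrw : (b₀ * Real.log b₀ - A * Real.log A) / (b₀ - A)
            = (A * Real.log A - b₀ * Real.log b₀) / (A - b₀) := by
          rw [← neg_div_neg_eq]; ring_nf
        rw [hrw, hS] at *
        linarith
      calc y = Real.exp (Real.log y) := (Real.exp_log hy).symm
        _ < Real.exp ((b₀ * Real.log b₀ - A * Real.log A) / (b₀ - A) - 1) :=
          Real.exp_lt_exp.mpr (by linarith)
        _ = h A := by simp only [hh]; rw [← Real.exp_add]; ring_nf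
    have hc : ContinuousOn h (Icc y A) := by
      apply hcont
      intro a ha
      have := ha.1
      intro hcontr
      nlinarith
    have := intermediate_value_Icc hAy.le hc
    have hmem : y ∈ Icc (h y) (h A) := ⟨hyy.le, hAlt.le⟩
    obtain ⟨c, hc1, hc2⟩ := this hmem
    have hcpos : 0 < c := lt_of_lt_of_le hy hc1.1
    have hcb : c ≠ b₀ := by have := hc1.1; intro hcontr; rw [hcontr] at this; linarith
    exact ⟨c, hcpos, hcb, by rw [hid c hcb, hc2]⟩
  · -- y < b₀ : search a ∈ [0, y]
    have hyb : y < b₀ := hby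
    have hyc : identricMean y b₀ ∈ Ioo y b₀ := im_mem hy hyb
    have hyy : y < h y := by rw [← hid y (ne_of_lt hyb)]; exact hyc.1
    have hc : ContinuousOn h (Icc 0 y) := by
      apply hcont
      intro a ha
      have := ha.2
      intro hcontr
      nlinarith [hyb]
    have := intermediate_value_Icc hy.le hc
    have hmem : y ∈ Icc (h 0) (h y) := ⟨h0lt.le, hyy.le⟩
    obtain ⟨c, hc1, hc2⟩ := this hmem
    have hc0 : c ≠ 0 := by rintro rfl; rw [hc2] at h0lt; exact lt_irrefl _ h0lt
    have hcpos : 0 < c := lt_of_le_of_ne hc1.1 (Ne.symm hc0)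
    have hcb : c ≠ b₀ := by have := hc1.2; intro hcontr; rw [hcontr] at this; linarith
    exact ⟨c, hcpos, hcb, by rw [hid c hcb, hc2]⟩

lemma key_lemma (f : ℝ → ℝ)
    (hdiff : ∀ x ∈ Set.Ioi (0 : ℝ), DifferentiableAt ℝ f x)
    (hfde : ∀ a ∈ Set.Ioi (0 : ℝ), ∀ b ∈ Set.Ioi (0 : ℝ),
      f b - f a = (b - a) * deriv f (identricMean a b))
    {y b₀ : ℝ} (hy : 0 < y) (hb : 0 < b₀) (hne : b₀ ≠ y)
    (hlt : b₀ < Real.exp 1 * y) :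
    DifferentiableAt ℝ (deriv f) y ∧
      deriv f b₀ - deriv f y = deriv (deriv f) y * (y * (Real.log b₀ - Real.log y)) := by
  obtain ⟨a, ha, hab, hI⟩ := im_exists hy hb hne hlt
  have hba : b₀ - a ≠ 0 := sub_ne_zero.mpr (Ne.symm hab)
  have hlog : Real.log b₀ ≠ Real.log y := by
    intro hcontr
    apply hne
    rw [← Real.exp_log hb, ← Real.exp_log hy, hcontr]
  -- derivative of the difference quotient
  have hφ : HasDerivAt (fun b => (f b - f a) / (b - a))
      ((deriv f b₀ * (b₀ - a) - (f b₀ - f a) * 1) / (b₀ - a) ^ 2) b₀ :=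
    (((hdiff b₀ hb).hasDerivAt).sub_const (f a)).div ((hasDerivAt_id b₀).sub_const a) hba
  -- strict derivative of b ↦ I a b
  have hψ := im_hasStrictDerivAt hb (Ne.symm hab)
  rw [hI] at hψ
  set V : ℝ := y * (Real.log b₀ - Real.log y) / (b₀ - a) with hV
  have hV0 : V ≠ 0 := div_ne_zero (mul_ne_zero hy.ne' (sub_ne_zero.mpr hlog)) hba
  -- local inverse
  set χ : ℝ → ℝ := hψ.localInverse (fun b => identricMean a b) V b₀ hV0 with hχ
  have hIb : (fun b => identricMean a b) b₀ = y := hI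
  have hF := hψ.hasStrictFDerivAt_equiv hV0
  have hχy : χ y = b₀ := by
    have := hF.localInverse_apply_image
    rw [hI] at this
    exact this
  have hrinv : ∀ᶠ z in 𝓝 y, identricMean a (χ z) = z := by
    have := hF.eventually_right_inverse
    rw [hI] at this
    exact this
  have hχcont : ContinuousAt χ y := by
    have := hF.localInverse_continuousAt
    rw [hI] at this
    exact this
  have hχd : HasDerivAt χ V⁻¹ y := by
    have := hψ.to_localInverse hV0
    rw [hI] at this
    exact this.hasDerivAt
  -- eventually, deriv f z equals the difference quotient at χ z
  have hopen : IsOpen {b : ℝ | 0 < b ∧ b ≠ a} :=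
    (isOpen_Ioi).inter isOpen_compl_singleton
  have hmem : χ y ∈ {b : ℝ | 0 < b ∧ b ≠ a} := by
    rw [hχy]; exact ⟨hb, Ne.symm hab⟩
  have heg : ∀ᶠ z in 𝓝 y, deriv f z = (f (χ z) - f a) / (χ z - a) := by
    filter_upwards [hrinv, hχcont.eventually_mem (hopen.mem_nhds hmem)] with z h1 h2
    have h3 : f (χ z) - f a = (χ z - a) * deriv f (identricMean a (χ z)) :=
      hfde a ha (χ z) h2.1
    rw [h1] at h3
    rw [eq_div_iff (sub_ne_zero.mpr h2.2)]
    linarith [h3]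
  -- derivative of deriv f at y
  have hcomp : HasDerivAt (fun z => (f (χ z) - f a) / (χ z - a))
      (((deriv f b₀ * (b₀ - a) - (f b₀ - f a) * 1) / (b₀ - a) ^ 2) * V⁻¹) y := by
    have hφ' : HasDerivAt (fun b => (f b - f a) / (b - a))
        ((deriv f b₀ * (b₀ - a) - (f b₀ - f a) * 1) / (b₀ - a) ^ 2) (χ y) := by
      rw [hχy]; exact hφ
    exact hφ'.comp y hχd
  have hgy : HasDerivAt (deriv f)
      (((deriv f b₀ * (b₀ - a) - (f b₀ - f a) * 1) / (b₀ - a) ^ 2) * V⁻¹) y :=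
    hcomp.congr_of_eventuallyEq heg
  refine ⟨hgy.differentiableAt, ?_⟩
  rw [hgy.deriv]
  have hfba : f b₀ - f a = (b₀ - a) * deriv f y := by
    rw [← hI]; exact hfde a ha b₀ hb
  rw [hfba, hV]
  have hw : y * (Real.log b₀ - Real.log y) ≠ 0 :=
    mul_ne_zero hy.ne' (sub_ne_zero.mpr hlog)
  rw [inv_div]
  field_simp


theorem stmt_2 (f : ℝ → ℝ)
    (hdiff : ∀ x ∈ Set.Ioi (0 : ℝ), DifferentiableAt ℝ f x)
    (hfde : ∀ a ∈ Set.Ioi (0 : ℝ), ∀ b ∈ Set.Ioi (0 : ℝ),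
      f b - f a = (b - a) * deriv f (identricMean a b)) :
    ∃ c₁ c₂ c₃ : ℝ, ∀ x ∈ Set.Ioi (0 : ℝ), f x = c₁ * x * Real.log x + c₂ * x + c₃ := by
  have hexp1 : (1:ℝ) < Real.exp 1 := by
    have := Real.add_one_lt_exp (by norm_num : (1:ℝ) ≠ 0)
    linarith
  set A : ℝ := deriv f 1 with hA
  set B : ℝ := deriv (deriv f) 1 with hB
  -- deriv f is affine in log
  have haff : ∀ y ∈ Set.Ioi (0:ℝ), deriv f y = A + B * Real.log y := by
    intro y hy
    rw [Set.mem_Ioi] at hy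
    set m : ℝ := min 1 y with hm
    have hmpos : 0 < m := lt_min one_pos hy
    set b₁ : ℝ := m / 2 with hb₁
    set b₂ : ℝ := m / 4 with hb₂
    have hb₁pos : 0 < b₁ := by positivity
    have hb₂pos : 0 < b₂ := by positivity
    have hm1 : m ≤ 1 := min_le_left _ _
    have hmy : m ≤ y := min_le_right _ _
    have hb₁1 : b₁ ≠ 1 := by rw [hb₁]; intro h; nlinarith
    have hb₂1 : b₂ ≠ 1 := by rw [hb₂]; intro h; nlinarith
    have hb₁y : b₁ ≠ y := by rw [hb₁]; intro h; nlinarith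
    have hb₂y : b₂ ≠ y := by rw [hb₂]; intro h; nlinarith
    have hb₁e1 : b₁ < Real.exp 1 * 1 := by nlinarith
    have hb₂e1 : b₂ < Real.exp 1 * 1 := by nlinarith
    have hb₁ey : b₁ < Real.exp 1 * y := by nlinarith
    have hb₂ey : b₂ < Real.exp 1 * y := by nlinarith
    have e1 := (key_lemma f hdiff hfde one_pos hb₁pos hb₁1 hb₁e1).2
    have e2 := (key_lemma f hdiff hfde one_pos hb₂pos hb₂1 hb₂e1).2
    have e3 := (key_lemma f hdiff hfde hy hb₁pos hb₁y hb₁ey).2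
    have e4 := (key_lemma f hdiff hfde hy hb₂pos hb₂y hb₂ey).2
    rw [Real.log_one] at e1 e2
    rw [← hB, ← hA] at e1 e2
    have hlogne : Real.log b₁ - Real.log b₂ ≠ 0 := by
      intro h
      have h12 : Real.log b₁ = Real.log b₂ := by linarith
      have : b₁ = b₂ := by
        rw [← Real.exp_log hb₁pos, ← Real.exp_log hb₂pos, h12]
      rw [hb₁, hb₂] at this
      nlinarith
    have h5 : (deriv (deriv f) y * y - B) * (Real.log b₁ - Real.log b₂) = 0 := by
      linear_combination e4 - e3 + e1 - e2
    have hCy : deriv (deriv f) y * y = B := by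
      rcases mul_eq_zero.mp h5 with h | h
      · linarith
      · exact absurd h hlogne
    linear_combination e1 - e3 - (Real.log b₁ - Real.log y) * hCy
  -- conclude
  refine ⟨B, A - B, f 1 - (A - B), ?_⟩
  intro x hx
  rw [Set.mem_Ioi] at hx
  rcases eq_or_ne x 1 with rfl | hx1
  · simp
  · have h1 : f x - f 1 = (x - 1) * deriv f (identricMean 1 x) :=
      hfde 1 (by norm_num) x hx
    have hIpos : 0 < identricMean 1 x := im_pos one_pos
    have hlogI : Real.log (identricMean 1 x)
        = (x * Real.log x - 1 * Real.log 1) / (x - 1) - 1 :=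
      im_log (fun h => hx1 h.symm)
    rw [Real.log_one] at hlogI
    have h2 : deriv f (identricMean 1 x) = A + B * Real.log (identricMean 1 x) :=
      haff _ hIpos
    rw [h2, hlogI] at h1
    have hx1' : x - 1 ≠ 0 := sub_ne_zero.mpr hx1
    field_simp at h1
    linarith [h1]
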